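/- Let G be a group with lower central series G = G₀ = G₁ ⊇ G₂ ⊇ ... (where G₀ = G₁ = G and G_{i+1} = [G, G_i]), and let ℓ ≥ 1. Then the Host–Kra cube group HK^ℓ(G_•) of the lower central series filtration — the subgroup of G^{{0,1}^ℓ} generated by all elements [g]_F where F ⊆ {0,1}^ℓ is a face of codimension i and g ∈ G_i, for all i ≥ 1 — is equal to the subgroup of G^{{0,1}^ℓ} generated by the elements [h]_F with h ∈ G and F a hyperface (a face of codimension 1). -/

import Mathlib

/-!
Common definitions: face elements, Host–Kra cube groups, dynamical cubes, and the
regional proximal relation of order `s`, following Gutman–Manners–Varjú.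

We model the discrete cube `{0,1}^ℓ` as `Fin ℓ → Bool`.
-/

open scoped Classical in
/-- The face element `[g]_F ∈ H^{{0,1}^ℓ}`: equal to `g` on `F` and to the identity
elsewhere. -/
noncomputable def faceEl (H : Type*) [Group H] {ℓ : ℕ} (g : H) (F : Set (Fin ℓ → Bool)) :
    (Fin ℓ → Bool) → H :=
  fun ω => if ω ∈ F then g else 1

/-- A hyperface of the discrete cube `{0,1}^ℓ`: a set of the form `{ω | ω i = a}`. -/
def IsHyperface {ℓ : ℕ} (F : Set (Fin ℓ → Bool)) : Prop :=
  ∃ (i : Fin ℓ) (a : Bool), F = {ω | ω i = a}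

/-- The Host–Kra cube group `HK^ℓ(H)`: the subgroup of `H^{{0,1}^ℓ}` generated by the
face elements `[h]_F` with `F` a hyperface. -/
noncomputable def hostKra (H : Type*) [Group H] (ℓ : ℕ) : Subgroup ((Fin ℓ → Bool) → H) :=
  Subgroup.closure {γ | ∃ (g : H) (F : Set (Fin ℓ → Bool)), IsHyperface F ∧ γ = faceEl H g F}

/-- The set of dynamical cubes `C^ℓ_H(X)`: the closure of the orbit of the constant
configurations under the Host–Kra cube group. -/
noncomputable def dynCubes (H : Type*) (X : Type*) [Group H] [TopologicalSpace X]
    [MulAction H X] (ℓ : ℕ) : Set ((Fin ℓ → Bool) → X) :=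
  closure {c | ∃ γ ∈ hostKra H ℓ, ∃ x : X, c = fun ω => γ ω • x}

/-- The corner configuration `∟^ℓ(x;y)`: the configuration whose vertex at `(1,…,1)` is `y`
and all of whose other vertices are `x`. -/
noncomputable def corner {X : Type*} (ℓ : ℕ) (x y : X) : (Fin ℓ → Bool) → X :=
  fun ω => if ω = (fun _ => true) then y else x

/-- The regional proximal relation of order `s`:
`RP^s_H(X) = {(x,y) | ∟^{s+1}(x;y) ∈ C^{s+1}_H(X)}`. -/
noncomputable def RP (H : Type*) (X : Type*) [Group H] [TopologicalSpace X] [MulAction H X]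
    (s : ℕ) : Set (X × X) :=
  {p | corner (s + 1) p.1 p.2 ∈ dynCubes H X (s + 1)}

/-- A face of the discrete cube `{0,1}^ℓ` of codimension `d`: the set of vertices where the
coordinates in a prescribed `d`-element set of indices take prescribed values. -/
def IsFaceOfCodim {ℓ : ℕ} (F : Set (Fin ℓ → Bool)) (d : ℕ) : Prop :=
  ∃ (S : Finset (Fin ℓ)) (a : Fin ℓ → Bool), S.card = d ∧ F = {ω | ∀ i ∈ S, ω i = a i}

/-- `g ↦ [g]_F` as a group homomorphism. -/
noncomputable def faceHom (G : Type*) [Group G] {ℓ : ℕ} (F : Set (Fin ℓ → Bool)) :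
    G →* ((Fin ℓ → Bool) → G) where
  toFun g := faceEl G g F
  map_one' := by funext ω; simp [faceEl]
  map_mul' g h := by
    funext ω
    simp only [faceEl, Pi.mul_apply]
    split <;> simp

open scoped commutatorElement

lemma faceEl_commutator {G : Type*} [Group G] {ℓ : ℕ} (x y : G)
    (F₁ F₂ : Set (Fin ℓ → Bool)) :
    faceEl G ⁅x, y⁆ (F₁ ∩ F₂) = ⁅faceEl G x F₁, faceEl G y F₂⁆ := by
  funext ω
  simp only [faceEl, commutatorElement_def, Pi.mul_apply, Pi.inv_apply, Set.mem_inter_iff]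
  by_cases h1 : ω ∈ F₁ <;> by_cases h2 : ω ∈ F₂ <;> simp [h1, h2]

lemma key_lemma {G : Type*} [Group G] {ℓ : ℕ} :
    ∀ (d : ℕ) (g : G) (F : Set (Fin ℓ → Bool)), IsFaceOfCodim F (d + 1) →
      g ∈ (⊤ : Subgroup G).lowerCentralSeries d →
      faceEl G g F ∈ Subgroup.closure {γ : (Fin ℓ → Bool) → G |
        ∃ (g : G) (F : Set (Fin ℓ → Bool)), IsFaceOfCodim F 1 ∧ γ = faceEl G g F} := by
  intro d
  induction d with
  | zero => exact fun g F hF _ => Subgroup.subset_closure ⟨g, F, hF, rfl⟩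
  | succ d ih =>
    intro g F hF hg
    set N := Subgroup.closure {γ : (Fin ℓ → Bool) → G |
        ∃ (g : G) (F : Set (Fin ℓ → Bool)), IsFaceOfCodim F 1 ∧ γ = faceEl G g F} with hN
    obtain ⟨S, a, hcard, rfl⟩ := hF
    obtain ⟨i, hi⟩ : S.Nonempty := Finset.card_pos.mp (by omega)
    set F₁ : Set (Fin ℓ → Bool) := {ω | ∀ j ∈ S.erase i, ω j = a j} with hF₁
    set F₂ : Set (Fin ℓ → Bool) := {ω | ω i = a i} with hF₂
    have hF12 : {ω : Fin ℓ → Bool | ∀ j ∈ S, ω j = a j} = F₁ ∩ F₂ := by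
      ext ω
      simp only [hF₁, hF₂, Set.mem_inter_iff, Set.mem_setOf_eq]
      constructor
      · exact fun h => ⟨fun j hj => h j (Finset.mem_of_mem_erase hj), h i hi⟩
      · rintro ⟨h1, h2⟩ j hj
        by_cases hji : j = i
        · subst hji; exact h2
        · exact h1 j (Finset.mem_erase.mpr ⟨hji, hj⟩)
    rw [hF12]
    have hle : (⊤ : Subgroup G).lowerCentralSeries (d + 1) ≤ N.comap (faceHom G (F₁ ∩ F₂)) := by
      rw [Subgroup.lowerCentralSeries_succ, Subgroup.commutator_def, Subgroup.closure_le]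
      rintro _ ⟨x, hx, y, -, rfl⟩
      rw [SetLike.mem_coe, Subgroup.mem_comap]
      have hx1 : faceEl G x F₁ ∈ N := by
        apply ih x F₁ ⟨S.erase i, a, ?_, rfl⟩ hx
        rw [Finset.card_erase_of_mem hi, hcard]; omega
      have hy2 : faceEl G y F₂ ∈ N := by
        apply Subgroup.subset_closure
        refine ⟨y, F₂, ⟨{i}, a, Finset.card_singleton i, ?_⟩, rfl⟩
        ext ω; simp [hF₂]
      have : (faceHom G (F₁ ∩ F₂)) (x * y * x⁻¹ * y⁻¹) = ⁅faceEl G x F₁, faceEl G y F₂⁆ := by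
        have h := faceEl_commutator x y F₁ F₂
        rw [commutatorElement_def] at h
        exact h
      rw [commutatorElement_def x y, this, commutatorElement_def]
      exact N.mul_mem (N.mul_mem (N.mul_mem hx1 hy2) (N.inv_mem hx1)) (N.inv_mem hy2)
    exact hle hg

/-- The Host–Kra cube group of the lower central series filtration
(`G₀ = G₁ = G`, `G_{i+1} = [G, G_i]`, so that for `i ≥ 1`, `G_i = lowerCentralSeries G (i-1)`),
generated by the elements `[g]_F` with `F` a face of codimension `i` and `g ∈ G_i`,
coincides with the subgroup generated by the `[h]_F` with `F` a hyperface (face of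
codimension `1`) and `h ∈ G`. -/
theorem statement9 {G : Type*} [Group G] {ℓ : ℕ} (hℓ : 1 ≤ ℓ) :
    Subgroup.closure {γ : (Fin ℓ → Bool) → G |
        ∃ (i : ℕ) (g : G) (F : Set (Fin ℓ → Bool)),
          1 ≤ i ∧ IsFaceOfCodim F i ∧ g ∈ (⊤ : Subgroup G).lowerCentralSeries (i - 1) ∧ γ = faceEl G g F} =
      Subgroup.closure {γ : (Fin ℓ → Bool) → G |
        ∃ (g : G) (F : Set (Fin ℓ → Bool)), IsFaceOfCodim F 1 ∧ γ = faceEl G g F} := by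
  apply le_antisymm
  · rw [Subgroup.closure_le]
    rintro γ ⟨i, g, F, hi, hF, hg, rfl⟩
    obtain ⟨d, rfl⟩ : ∃ d, i = d + 1 := ⟨i - 1, by omega⟩
    simpa using key_lemma d g F hF (by simpa using hg)
  · rw [Subgroup.closure_le]
    rintro γ ⟨g, F, hF, rfl⟩
    exact Subgroup.subset_closure ⟨1, g, F, le_refl 1, hF, by simp, rfl⟩
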